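/- arXiv:1911.08411 — 2 statements merged into one kernel-verified Lean document; each statement's English description precedes it below -/
import Mathlib

section
/- For fixed points x, y ∈ ℝⁿ, the Poincaré gyrospace distance d_gyr(x,y) = (2/√(-K))·arctanh(√(-K)·‖(-x) ⊕_K y‖₂) converges to 2‖x - y‖₂ as K → 0⁻. -/
open Filter Topology

/-- Möbius addition with curvature `K` on `ℝⁿ`. -/
noncomputable def mobiusAdd {n : ℕ} (K : ℝ) (x y : EuclideanSpace ℝ (Fin n)) :
    EuclideanSpace ℝ (Fin n) :=
  (1 / (1 - 2 * K * (inner ℝ x y : ℝ) + K ^ 2 * ‖x‖ ^ 2 * ‖y‖ ^ 2)) •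
    ((1 - 2 * K * (inner ℝ x y : ℝ) - K * ‖y‖ ^ 2) • x + (1 + K * ‖x‖ ^ 2) • y)

/-- The inverse hyperbolic tangent. -/
noncomputable def artanh (x : ℝ) : ℝ := (1 / 2) * Real.log ((1 + x) / (1 - x))

lemma artanh_zero : artanh 0 = 0 := by simp [artanh]

lemma artanh_hasDerivAt : HasDerivAt artanh 1 0 := by
  have ha : HasDerivAt (fun s : ℝ => 1 + s) 1 0 := by
    simpa using (hasDerivAt_id (0:ℝ)).const_add 1
  have hb : HasDerivAt (fun s : ℝ => 1 - s) (-1) 0 := by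
    simpa using (hasDerivAt_id (0:ℝ)).const_sub 1
  have h1 : HasDerivAt (fun s : ℝ => (1 + s) / (1 - s)) 2 0 := by
    have := ha.div hb (by norm_num)
    norm_num at this
    exact this
  have h2 : HasDerivAt (fun s => Real.log ((1 + s) / (1 - s))) 2 0 := by
    have := h1.log (by norm_num)
    norm_num at this
    exact this
  have := h2.const_mul (1/2 : ℝ)
  norm_num at this
  exact this

/-- The Poincaré gyrospace distance converges to (twice) the Euclidean distance
as `K → 0⁻`. -/
theorem gyroDist_poincare_tendsto {n : ℕ} (x y : EuclideanSpace ℝ (Fin n)) :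
    Tendsto
      (fun K : ℝ => (2 / Real.sqrt (-K)) * artanh (Real.sqrt (-K) * ‖mobiusAdd K (-x) y‖))
      (𝓝[<] 0) (𝓝 (2 * ‖x - y‖)) := by
  set m : ℝ → EuclideanSpace ℝ (Fin n) := fun K => mobiusAdd K (-x) y with hm
  have hm0 : m 0 = y - x := by
    simp [hm, mobiusAdd, sub_eq_add_neg, add_comm]
  have hcont : ContinuousAt m 0 := by
    simp only [hm, mobiusAdd]
    refine ContinuousAt.smul (f := fun K : ℝ => 1 / (1 - 2 * K * inner ℝ (-x) y + K ^ 2 * ‖-x‖ ^ 2 * ‖y‖ ^ 2))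
      (g := fun K : ℝ => (1 - 2 * K * inner ℝ (-x) y - K * ‖y‖ ^ 2) • -x + (1 + K * ‖-x‖ ^ 2) • y) ?_ ?_
    · apply ContinuousAt.div continuousAt_const
      · fun_prop
      · norm_num
    · fun_prop
  have htm : Tendsto m (𝓝[<] (0:ℝ)) (𝓝 (y - x)) := by
    simpa [hm0] using hcont.tendsto.mono_left nhdsWithin_le_nhds
  have hnorm : Tendsto (fun K => ‖m K‖) (𝓝[<] (0:ℝ)) (𝓝 ‖y - x‖) := htm.norm
  have hsqrt : Tendsto (fun K : ℝ => Real.sqrt (-K)) (𝓝[<] (0:ℝ)) (𝓝 0) := by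
    have : Tendsto (fun K : ℝ => Real.sqrt (-K)) (𝓝 (0:ℝ)) (𝓝 0) := by
      simpa [Function.comp_def] using (Real.continuous_sqrt.comp continuous_neg).tendsto 0
    exact this.mono_left nhdsWithin_le_nhds
  have hs : Tendsto (fun K : ℝ => Real.sqrt (-K) * ‖m K‖) (𝓝[<] (0:ℝ)) (𝓝 0) := by
    simpa using hsqrt.mul hnorm
  set G : ℝ → ℝ := fun s => if s = 0 then 1 else artanh s / s with hG
  have hGslope : Tendsto G (𝓝[≠] (0:ℝ)) (𝓝 1) := by
    have := hasDerivAt_iff_tendsto_slope.mp artanh_hasDerivAt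
    apply this.congr'
    filter_upwards [self_mem_nhdsWithin] with s hs
    simp only [Set.mem_compl_iff, Set.mem_singleton_iff] at hs
    simp [hG, hs, slope_def_field, artanh_zero, div_eq_inv_mul]
  have hGtendsto : Tendsto G (𝓝 (0:ℝ)) (𝓝 1) := by
    rw [← nhdsNE_sup_pure, tendsto_sup]
    refine ⟨hGslope, ?_⟩
    have : G 0 = 1 := by simp [hG]
    simpa [this] using tendsto_pure_nhds G 0
  have hmain : Tendsto (fun K => 2 * ‖m K‖ * G (Real.sqrt (-K) * ‖m K‖))
      (𝓝[<] (0:ℝ)) (𝓝 (2 * ‖x - y‖)) := by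
    have := (hnorm.const_mul (2:ℝ)).mul (hGtendsto.comp hs)
    simpa [norm_sub_rev y x, Function.comp, mul_assoc] using this
  apply hmain.congr'
  filter_upwards [self_mem_nhdsWithin] with K hK
  have hKneg : K < 0 := hK
  have ht : Real.sqrt (-K) > 0 := Real.sqrt_pos.mpr (by linarith)
  by_cases hr : ‖m K‖ = 0
  · have hr' : ‖mobiusAdd K (-x) y‖ = 0 := hr
    simp [hG, hr, hr', artanh_zero]
  · have hs0 : Real.sqrt (-K) * ‖m K‖ ≠ 0 := mul_ne_zero (ne_of_gt ht) hr
    simp only [hG, hs0, if_neg, ↓reduceIte]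
    change _ = 2 / Real.sqrt (-K) * artanh (Real.sqrt (-K) * ‖m K‖)
    field_simp
end

section
/- For fixed points x, y ∈ ℝⁿ, the projected-sphere gyrospace distance d_gyr(x,y) = (2/√K)·arctan(√K·‖(-x) ⊕_K y‖₂) converges to 2‖x - y‖₂ as K → 0⁺. -/
open Filter Topology

noncomputable def gratio (u : ℝ) : ℝ := if u = 0 then 1 else Real.arctan u / u

lemma gratio_tendsto : Tendsto gratio (𝓝 0) (𝓝 1) := by
  have h := Real.hasDerivAt_arctan 0
  rw [hasDerivAt_iff_tendsto_slope] at h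
  have h1 : Tendsto gratio (𝓝[≠] (0:ℝ)) (𝓝 1) := by
    have : (1 : ℝ) / (1 + 0 ^ 2) = 1 := by norm_num
    rw [this] at h
    refine h.congr' ?_
    filter_upwards [self_mem_nhdsWithin] with u hu
    have hu' : u ≠ 0 := hu
    simp [slope, gratio, if_neg hu', div_eq_inv_mul]
  have h2 : Tendsto gratio (pure (0:ℝ)) (𝓝 1) := by
    have := tendsto_pure_nhds gratio 0
    simpa [gratio] using this
  rw [← nhdsNE_sup_pure]
  exact tendsto_sup.mpr ⟨h1, h2⟩

/-- The projected-sphere gyrospace distance converges to (twice) the Euclidean distance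
as `K → 0⁺`. -/
theorem gyroDist_sphere_tendsto {n : ℕ} (x y : EuclideanSpace ℝ (Fin n)) :
    Tendsto
      (fun K : ℝ =>
        (2 / Real.sqrt K) * Real.arctan (Real.sqrt K * ‖mobiusAdd K (-x) y‖))
      (𝓝[>] 0) (𝓝 (2 * ‖x - y‖)) := by
  set a : ℝ → ℝ := fun K => ‖mobiusAdd K (-x) y‖ with ha_def
  have hcont : ContinuousAt (fun K : ℝ => mobiusAdd K (-x) y) 0 := by
    unfold mobiusAdd
    apply ContinuousAt.fun_smul
    · exact ContinuousAt.div continuousAt_const (by fun_prop) (by norm_num)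
    · fun_prop
  have hval : mobiusAdd 0 (-x) y = y - x := by
    simp [mobiusAdd]
    abel
  have ha : Tendsto a (𝓝 0) (𝓝 ‖x - y‖) := by
    have := hcont.norm.tendsto
    rw [hval, norm_sub_rev] at this
    exact this
  have h0 : Tendsto (fun K : ℝ => Real.sqrt K * a K) (𝓝[>] 0) (𝓝 0) := by
    have h1 : Tendsto (fun K : ℝ => Real.sqrt K * a K) (𝓝 0)
        (𝓝 (Real.sqrt 0 * ‖x - y‖)) := (Real.continuous_sqrt.tendsto 0).mul ha
    simpa using h1.mono_left nhdsWithin_le_nhds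
  have hlim : Tendsto (fun K : ℝ => 2 * a K * gratio (Real.sqrt K * a K))
      (𝓝[>] 0) (𝓝 (2 * ‖x - y‖ * 1)) :=
    (tendsto_const_nhds.mul (ha.mono_left nhdsWithin_le_nhds)).mul
      (gratio_tendsto.comp h0)
  rw [mul_one] at hlim
  refine hlim.congr' ?_
  filter_upwards [self_mem_nhdsWithin] with K (hK : 0 < K)
  have hsK : 0 < Real.sqrt K := Real.sqrt_pos.mpr hK
  by_cases h : a K = 0
  · have h' : mobiusAdd K (-x) y = 0 := norm_eq_zero.mp h
    simp [gratio, h', ha_def]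
  · have hu : Real.sqrt K * a K ≠ 0 := mul_ne_zero hsK.ne' h
    simp only [gratio, if_neg hu]
    field_simp
    exact congrArg Real.arctan (mul_comm _ _)
end
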